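/- Assume Assumption 1 holds and fix a positive integer q. If ⟨C, Ψ_l⟩_𝒮 ≠ 0 for some l > q, then with probability 1, ι(Ĉ_n, δ_n) > q for all sufficiently large n. -/
import Mathlib


open MeasureTheory Filter
open scoped RealInnerProductSpace

variable {𝒮 : Type*} [NormedAddCommGroup 𝒮] [InnerProductSpace ℝ 𝒮]

/-- `P_j(S) = ∑_{l=1}^{j} ⟨S, Ψ_l⟩ Ψ_l`, the orthogonal projection of `S` onto
`W_j = span {Ψ_1, …, Ψ_j}` (indices `0, …, j-1` in `0`-indexed notation). -/
noncomputable def basisProj (Ψ : HilbertBasis ℕ ℝ 𝒮) (j : ℕ) (S : 𝒮) : 𝒮 :=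
  ∑ l ∈ Finset.range j, ⟪S, Ψ l⟫ • Ψ l

/-- `W_j = span {Ψ_1, …, Ψ_j}` (i.e. the span of `Ψ 0, …, Ψ (j-1)`). -/
def basisSpan (Ψ : HilbertBasis ℕ ℝ 𝒮) (j : ℕ) : Submodule ℝ 𝒮 :=
  Submodule.span ℝ ((fun l => Ψ l) '' Set.Iio j)

/-- `ι(S, δ) = min {j ≥ 1 : ‖S - P_j(S)‖_𝒮 < δ}`. -/
noncomputable def iotaDim (Ψ : HilbertBasis ℕ ℝ 𝒮) (S : 𝒮) (δ : ℝ) : ℕ :=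
  sInf {j | 1 ≤ j ∧ ‖S - basisProj Ψ j S‖ < δ}

lemma aux_inner_le_norm_sub_proj (Ψ : HilbertBasis ℕ ℝ 𝒮) (S : 𝒮) {j l : ℕ}
    (hjl : j ≤ l) : |⟪S, Ψ l⟫| ≤ ‖S - basisProj Ψ j S‖ := by
  have hinner : ⟪S - basisProj Ψ j S, Ψ l⟫ = ⟪S, Ψ l⟫ := by
    rw [inner_sub_left, basisProj, sum_inner]
    have : ∀ i ∈ Finset.range j, ⟪(⟪S, Ψ i⟫ : ℝ) • Ψ i, Ψ l⟫ = 0 := by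
      intro i hi
      rw [inner_smul_left]
      have hil : i ≠ l := by
        have := Finset.mem_range.mp hi; omega
      rw [Ψ.orthonormal.2 hil]
      simp
    rw [Finset.sum_congr rfl this]
    simp
  calc |⟪S, Ψ l⟫| = |⟪S - basisProj Ψ j S, Ψ l⟫| := by rw [hinner]
    _ ≤ ‖S - basisProj Ψ j S‖ * ‖Ψ l‖ := abs_real_inner_le_norm _ _
    _ = ‖S - basisProj Ψ j S‖ := by rw [Ψ.orthonormal.1 l, mul_one]

lemma aux_exists_proj_close (Ψ : HilbertBasis ℕ ℝ 𝒮) (S : 𝒮) {d : ℝ} (hd : 0 < d) :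
    ∃ j, 1 ≤ j ∧ ‖S - basisProj Ψ j S‖ < d := by
  have hsum : HasSum (fun i => (⟪S, Ψ i⟫ : ℝ) • Ψ i) S := by
    have := Ψ.hasSum_repr S
    convert this using 2 with i
    rw [Ψ.repr_apply_apply, real_inner_comm]
  have htend : Tendsto (fun j => basisProj Ψ j S) atTop (nhds S) :=
    hsum.tendsto_sum_nat
  have : Tendsto (fun j => ‖S - basisProj Ψ j S‖) atTop (nhds 0) := by
    have h := (htend.const_sub S).norm
    simpa using h
  have hev : ∀ᶠ j in atTop, ‖S - basisProj Ψ j S‖ < d := by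
    have := this.eventually (eventually_lt_nhds hd)
    simpa using this
  obtain ⟨j, hj1, hj2⟩ := ((eventually_ge_atTop 1).and hev).exists
  exact ⟨j, hj1, hj2⟩

/-- Under Assumption 1, if `⟨C, Ψ_l⟩ ≠ 0` for some `l > q` (`1`-indexed,
i.e. `⟪C, Ψ l⟫ ≠ 0` for some `0`-indexed `l ≥ q`), then almost surely `ι(Ĉ_n, δ_n) > q`
for all sufficiently large `n`. -/
theorem expansion_exceeds_q_detection
    {𝒮 : Type*} [NormedAddCommGroup 𝒮] [InnerProductSpace ℝ 𝒮]
    {Ω : Type*} [MeasurableSpace Ω] (ℙ : Measure Ω) [IsProbabilityMeasure ℙ]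
    [MeasurableSpace 𝒮] [BorelSpace 𝒮]
    (Ψ : HilbertBasis ℕ ℝ 𝒮)
    (Chat : ℕ → Ω → 𝒮) (hChat : ∀ n, Measurable (Chat n))
    (C : 𝒮)
    (R : ℕ → ℝ) (hRpos : ∀ n, 0 < R n) (hRanti : StrictAnti R)
    (hRlim : Tendsto R atTop (nhds 0))
    (hrate : ∀ᵐ ω ∂ℙ, ∀ᶠ n in atTop, ‖Chat n ω - C‖ < R n)
    (ε : ℝ) (hε : 0 < ε) (δ : ℕ → ℝ) (hδ : ∀ n, δ n = (1 + ε) * R n)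
    (q : ℕ) (hq : 1 ≤ q) (hbig : ∃ l, q ≤ l ∧ ⟪C, Ψ l⟫ ≠ 0) :
    ∀ᵐ ω ∂ℙ, ∀ᶠ n in atTop, q < iotaDim Ψ (Chat n ω) (δ n) := by
  obtain ⟨l, hql, hCl⟩ := hbig
  set c : ℝ := |⟪C, Ψ l⟫| with hc
  have hcpos : 0 < c := abs_pos.mpr hCl
  have hRsmall : ∀ᶠ n in atTop, R n < c / (2 + ε) := by
    have hpos : (0 : ℝ) < c / (2 + ε) := div_pos hcpos (by linarith)
    exact hRlim.eventually (eventually_lt_nhds hpos)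
  filter_upwards [hrate] with ω hω
  filter_upwards [hω, hRsmall] with n hn hRn
  set S := Chat n ω
  have hδpos : 0 < δ n := by rw [hδ]; exact mul_pos (by linarith) (hRpos n)
  -- every element of the set is > q
  have hkey : ∀ j ∈ {j | 1 ≤ j ∧ ‖S - basisProj Ψ j S‖ < δ n}, q < j := by
    intro j hj
    obtain ⟨hj1, hj2⟩ := hj
    by_contra hle
    push_neg at hle
    have hjl : j ≤ l := le_trans hle hql
    have h1 : |⟪S, Ψ l⟫| ≤ ‖S - basisProj Ψ j S‖ :=
      aux_inner_le_norm_sub_proj Ψ S hjl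
    have h2 : c - ‖S - C‖ ≤ |⟪S, Ψ l⟫| := by
      have hdiff : |⟪S - C, Ψ l⟫| ≤ ‖S - C‖ := by
        calc |⟪S - C, Ψ l⟫| ≤ ‖S - C‖ * ‖Ψ l‖ := abs_real_inner_le_norm _ _
          _ = ‖S - C‖ := by rw [Ψ.orthonormal.1 l, mul_one]
      have : ⟪S, Ψ l⟫ = ⟪C, Ψ l⟫ + ⟪S - C, Ψ l⟫ := by
        rw [inner_sub_left]; ring
      rw [this]
      have habs : |(⟪C, Ψ l⟫ : ℝ)| ≤ |⟪C, Ψ l⟫ + ⟪S - C, Ψ l⟫| + |⟪S - C, Ψ l⟫| := by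
        have h := abs_add_le ((⟪C, Ψ l⟫ : ℝ) + ⟪S - C, Ψ l⟫) (-(⟪S - C, Ψ l⟫ : ℝ))
        simpa using h
      rw [hc]
      linarith
    have h3 : ‖S - C‖ < R n := hn
    have h4 : (1 + ε) * R n < c - R n := by
      have : (2 + ε) * R n < c := by
        rw [lt_div_iff₀ (by linarith : (0:ℝ) < 2 + ε)] at hRn
        linarith [hRn]
      linarith
    rw [hδ] at hj2
    linarith
  -- the set is nonempty
  obtain ⟨j₀, hj₀⟩ := aux_exists_proj_close Ψ S hδpos
  have hne : {j | 1 ≤ j ∧ ‖S - basisProj Ψ j S‖ < δ n}.Nonempty := ⟨j₀, hj₀⟩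
  exact hkey _ (Nat.sInf_mem hne)
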